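/- Let Y be a connected, locally finite simple graph with vertex set V and let H be a group acting freely on V by automorphisms of Y. Suppose the number of filtered ends e(Y,H) equals e with e finite and nonzero. Then there exists an increasing sequence of finite subsets D₁ ⊆ D₂ ⊆ ⋯ of V with ⋃ₙ H•Dₙ = V such that for every n, the subgraph of Y induced on V ∖ H•Dₙ has exactly e connected components, and every one of these components is H-unbounded. -/

import Mathlib

open SimpleGraph

/-- The saturation `K • S` of a set `S` of vertices under the action of a subgroup `K`. -/
def Subgroup.satSet {H : Type*} [Group H] (K : Subgroup H) {V : Type*} [MulAction H V]
    (S : Set V) : Set V :=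
  {v | ∃ g ∈ K, ∃ s ∈ S, g • s = v}

theorem Subgroup.satSet_mono {H : Type*} [Group H] (K : Subgroup H) {V : Type*}
    [MulAction H V] {S S' : Set V} (h : S ⊆ S') : K.satSet S ⊆ K.satSet S' := by
  rintro v ⟨g, hg, s, hs, rfl⟩
  exact ⟨g, hg, s, h hs, rfl⟩

/-- A set of vertices is `K`-bounded if it is contained in the saturation of a finite set. -/
def Subgroup.bddSet {H : Type*} [Group H] (K : Subgroup H) {V : Type*} [MulAction H V]
    (A : Set V) : Prop :=
  ∃ T : Finset V, A ⊆ K.satSet ↑T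

/-- The inclusion of one induced subgraph into a larger one, as a graph homomorphism. -/
def SimpleGraph.inclHom {V : Type*} (Y : SimpleGraph V) {W W' : Set V} (h : W ⊆ W') :
    Y.induce W →g Y.induce W' where
  toFun v := ⟨v.1, h v.2⟩
  map_rel' := fun hab => hab

/-- The set of filtered ends of a graph `Y` with respect to a subgroup `K` of a group acting
on the vertices: the inverse limit, over finite sets `S` of vertices directed by inclusion, of
the sets of connected components of the subgraph induced on the complement of `K • S`. -/
def filteredEnds {V H : Type*} [Group H] [MulAction H V] (Y : SimpleGraph V)
    (K : Subgroup H) : Type _ :=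
  { f : ∀ S : Finset V, (Y.induce ((K.satSet (S : Set V))ᶜ)).ConnectedComponent //
      ∀ ⦃S S' : Finset V⦄ (h : S ⊆ S'),
        (f S').map (Y.inclHom (Set.compl_subset_compl.mpr
          (K.satSet_mono (Finset.coe_subset.mpr h)))) = f S }

/-- The set of vertices adjacent to some vertex of `W`. -/
def SimpleGraph.nbhd {V : Type*} (Y : SimpleGraph V) (W : Set V) : Set V :=
  {v | ∃ w ∈ W, Y.Adj v w}

/-- The Cayley graph of a group with respect to a finite set `S₀`. -/
def cayleyGraph (G : Type*) [Group G] (S₀ : Finset G) : SimpleGraph G where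
  Adj x y := x ≠ y ∧ (x⁻¹ * y ∈ S₀ ∨ y⁻¹ * x ∈ S₀)
  symm := ⟨by
    rintro x y ⟨hne, h⟩
    exact ⟨hne.symm, h.symm⟩⟩
  loopless := ⟨fun x h => h.1 rfl⟩

namespace StmtAux

variable {V H : Type} [Group H] [MulAction H V]

/-- Abbreviation for the full saturation. -/
abbrev sat (S : Set V) : Set V := (⊤ : Subgroup H).satSet S

lemma mem_sat {S : Set V} {v : V} : v ∈ sat (H := H) S ↔ ∃ g : H, ∃ s ∈ S, g • s = v := by
  constructor
  · rintro ⟨g, -, s, hs, rfl⟩; exact ⟨g, s, hs, rfl⟩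
  · rintro ⟨g, s, hs, rfl⟩; exact ⟨g, trivial, s, hs, rfl⟩

lemma subset_sat {S : Set V} : S ⊆ sat (H := H) S := fun s hs =>
  mem_sat.mpr ⟨1, s, hs, one_smul _ _⟩

lemma smul_mem_sat {S : Set V} {v : V} (g : H) (hv : v ∈ sat (H := H) S) :
    g • v ∈ sat (H := H) S := by
  obtain ⟨g', s, hs, rfl⟩ := mem_sat.mp hv
  exact mem_sat.mpr ⟨g * g', s, hs, (mul_smul g g' s)⟩

lemma smul_mem_sat_iff {S : Set V} {v : V} (g : H) :
    g • v ∈ sat (H := H) S ↔ v ∈ sat (H := H) S := by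
  constructor
  · intro h
    have := smul_mem_sat (g⁻¹) h
    rwa [inv_smul_smul] at this
  · exact smul_mem_sat g

lemma sat_mono {S S' : Set V} (h : S ⊆ S') : sat (H := H) S ⊆ sat (H := H) S' := by
  rintro v hv
  obtain ⟨g, s, hs, rfl⟩ := mem_sat.mp hv
  exact mem_sat.mpr ⟨g, s, h hs, rfl⟩

lemma sat_union {S T : Set V} :
    sat (H := H) (S ∪ T) = sat (H := H) S ∪ sat (H := H) T := by
  ext v
  constructor
  · intro hv
    obtain ⟨g, s, hs, rfl⟩ := mem_sat.mp hv
    rcases hs with hs | hs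
    · exact Or.inl (mem_sat.mpr ⟨g, s, hs, rfl⟩)
    · exact Or.inr (mem_sat.mpr ⟨g, s, hs, rfl⟩)
  · rintro (hv | hv)
    · exact sat_mono Set.subset_union_left hv
    · exact sat_mono Set.subset_union_right hv

variable {Y : SimpleGraph V}

/-- action of `g` as a hom of the induced graph on the complement of a saturated set. -/
def autHom (haut : ∀ (g : H) (u v : V), Y.Adj (g • u) (g • v) ↔ Y.Adj u v)
    (S : Set V) (g : H) :
    Y.induce ((sat (H := H) S)ᶜ) →g Y.induce ((sat (H := H) S)ᶜ) where
  toFun x := ⟨g • x.1, fun h => x.2 ((smul_mem_sat_iff g).mp h)⟩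
  map_rel' := fun {a b} hab => by
    change Y.Adj (g • a.1) (g • b.1)
    exact (haut g a.1 b.1).mpr hab

lemma reach_smul (haut : ∀ (g : H) (u v : V), Y.Adj (g • u) (g • v) ↔ Y.Adj u v)
    {S : Set V} (g : H) {u w : V} {hu : u ∈ (sat (H := H) S)ᶜ} {hw : w ∈ (sat (H := H) S)ᶜ}
    (h : (Y.induce ((sat (H := H) S)ᶜ)).Reachable ⟨u, hu⟩ ⟨w, hw⟩)
    {hu' : g • u ∈ (sat (H := H) S)ᶜ} {hw' : g • w ∈ (sat (H := H) S)ᶜ} :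
    (Y.induce ((sat (H := H) S)ᶜ)).Reachable ⟨g • u, hu'⟩ ⟨g • w, hw'⟩ :=
  h.map (autHom haut S g)

/-- `v` lies in the support of a component iff some lift does. -/
lemma mem_val_supp {W : Set V} {c : (Y.induce W).ConnectedComponent} {v : V} :
    v ∈ Subtype.val '' c.supp ↔
      ∃ hv : v ∈ W, (Y.induce W).connectedComponentMk ⟨v, hv⟩ = c := by
  constructor
  · rintro ⟨⟨x, hx⟩, hmem, rfl⟩
    exact ⟨hx, hmem⟩
  · rintro ⟨hv, h⟩
    exact ⟨⟨v, hv⟩, h, rfl⟩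

/-- The union of the supports of the bounded components of the complement of `sat S`. -/
def bddPart (Y : SimpleGraph V) (S : Set V) : Set V :=
  {v | ∃ hv : v ∈ (sat (H := H) S)ᶜ,
    (⊤ : Subgroup H).bddSet (Subtype.val ''
      ((Y.induce ((sat (H := H) S)ᶜ)).connectedComponentMk ⟨v, hv⟩).supp)}

lemma bdd_of_reach {S : Set V} {u w : V} {hu : u ∈ (sat (H := H) S)ᶜ}
    {hw : w ∈ (sat (H := H) S)ᶜ}
    (h : (Y.induce ((sat (H := H) S)ᶜ)).Reachable ⟨u, hu⟩ ⟨w, hw⟩)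
    (hb : u ∈ bddPart (H := H) Y S) : w ∈ bddPart (H := H) Y S := by
  obtain ⟨hu2, T, hT⟩ := hb
  refine ⟨hw, T, ?_⟩
  have : (Y.induce ((sat (H := H) S)ᶜ)).connectedComponentMk ⟨w, hw⟩ =
      (Y.induce ((sat (H := H) S)ᶜ)).connectedComponentMk ⟨u, hu2⟩ :=
    ConnectedComponent.sound h.symm
  rw [this]
  exact hT

lemma smul_mem_bddPart {S : Set V}
    (haut : ∀ (g : H) (u v : V), Y.Adj (g • u) (g • v) ↔ Y.Adj u v) {v : V} (g : H)
    (hb : v ∈ bddPart (H := H) Y S) : g • v ∈ bddPart (H := H) Y S := by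
  obtain ⟨hv, T, hT⟩ := hb
  have hgv : g • v ∈ (sat (H := H) S)ᶜ := fun h => hv ((smul_mem_sat_iff g).mp h)
  refine ⟨hgv, T, ?_⟩
  rintro x hx
  rw [mem_val_supp] at hx
  obtain ⟨hx1, hx2⟩ := hx
  -- x reachable from g•v; so g⁻¹•x reachable from v, hence in sat T, hence x ∈ sat T
  have hr : (Y.induce ((sat (H := H) S)ᶜ)).Reachable ⟨g • v, hgv⟩ ⟨x, hx1⟩ :=
    (ConnectedComponent.eq.mp hx2).symm
  have hx1' : g⁻¹ • x ∈ (sat (H := H) S)ᶜ := fun h => hx1 (by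
    have := (smul_mem_sat_iff (S := S) g).mpr h
    rwa [smul_inv_smul] at this)
  have hv' : (g : H)⁻¹ • (g • v) ∈ (sat (H := H) S)ᶜ := by rwa [inv_smul_smul]
  have hr' := reach_smul haut (g⁻¹) hr (hu' := hv') (hw' := hx1')
  have hmem : g⁻¹ • x ∈ Subtype.val ''
      ((Y.induce ((sat (H := H) S)ᶜ)).connectedComponentMk ⟨v, hv⟩).supp := by
    rw [mem_val_supp]
    refine ⟨hx1', ?_⟩
    refine ConnectedComponent.sound ?_
    apply Reachable.symm
    have heq : (⟨v, hv⟩ : ((sat (H := H) S)ᶜ : Set V)) = ⟨g⁻¹ • (g • v), hv'⟩ :=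
      Subtype.ext (inv_smul_smul g v).symm
    rw [heq]
    exact hr'
  have h1 := hT hmem
  have h2 := smul_mem_sat (S := (T : Set V)) g h1
  rwa [smul_inv_smul] at h2

lemma exists_boundary {A : Set V} : ∀ {v w : V}, Y.Walk v w → ∀ (hv : v ∉ A), w ∈ A →
    ∃ x y, Y.Adj x y ∧ y ∈ A ∧ ∃ hx : x ∉ A,
      (Y.induce Aᶜ).Reachable ⟨v, hv⟩ ⟨x, hx⟩ := by
  intro v w p
  induction p with
  | nil => intro hv hw; exact absurd hw hv
  | @cons a b c hab p ih =>
    intro hv hw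
    by_cases hb : b ∈ A
    · exact ⟨a, b, hab, hb, hv, Reachable.refl _⟩
    · obtain ⟨x, y, hxy, hy, hx, hr⟩ := ih hb hw
      refine ⟨x, y, hxy, hy, hx, Reachable.trans ?_ hr⟩
      exact Adj.reachable (by exact hab : (Y.induce Aᶜ).Adj ⟨a, hv⟩ ⟨b, hb⟩)

lemma reach_transfer {W W' : Set V} {B : Set V}
    (hWW' : ∀ x, x ∈ W → x ∉ B → x ∈ W')
    (hB : ∀ {x y : V} (hx : x ∈ W) (hy : y ∈ W),
      (Y.induce W).Adj ⟨x, hx⟩ ⟨y, hy⟩ → x ∉ B → y ∉ B) :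
    ∀ {u w : (W : Set V)}, (Y.induce W).Walk u w → u.1 ∉ B →
      ∃ (hu' : u.1 ∈ W') (hw' : w.1 ∈ W'),
        (Y.induce W').Reachable ⟨u.1, hu'⟩ ⟨w.1, hw'⟩ := by
  intro u w p
  induction p with
  | @nil x => intro hu; exact ⟨hWW' _ x.2 hu, hWW' _ x.2 hu, Reachable.refl _⟩
  | @cons a b c hab p ih =>
    intro hu
    have hb : b.1 ∉ B := hB a.2 b.2 (by exact hab) hu
    obtain ⟨hb', hw', hr⟩ := ih hb
    refine ⟨hWW' _ a.2 hu, hw', Reachable.trans ?_ hr⟩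
    exact Adj.reachable (by exact hab :
      (Y.induce W').Adj ⟨a.1, hWW' a.1 a.2 hu⟩ ⟨b.1, hb'⟩)

-- new material
lemma to_boundary (hconn : Y.Connected)
    (haut : ∀ (g : H) (u v : V), Y.Adj (g • u) (g • v) ↔ Y.Adj u v)
    {S : Set V} (hS : S.Nonempty) {v : V} (hv : v ∈ (sat (H := H) S)ᶜ) :
    ∃ (g : H) (x s : V), s ∈ S ∧ Y.Adj x s ∧
      ∃ (hx : x ∈ (sat (H := H) S)ᶜ) (hgv : g • v ∈ (sat (H := H) S)ᶜ),
      (Y.induce ((sat (H := H) S)ᶜ)).Reachable ⟨g • v, hgv⟩ ⟨x, hx⟩ := by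
  obtain ⟨s₀, hs₀⟩ := hS
  obtain ⟨p⟩ := hconn v s₀
  obtain ⟨x₀, y, hxy, hy, hx₀, hr⟩ := exists_boundary p hv (subset_sat hs₀)
  obtain ⟨g₀, s, hs, rfl⟩ := mem_sat.mp hy
  refine ⟨g₀⁻¹, g₀⁻¹ • x₀, s, hs, ?_, ?_, ?_, ?_⟩
  · have := (haut g₀⁻¹ x₀ (g₀ • s)).mpr hxy
    rwa [inv_smul_smul] at this
  · exact fun h => hx₀ ((smul_mem_sat_iff g₀⁻¹).mp h)
  · exact fun h => hv ((smul_mem_sat_iff g₀⁻¹).mp h)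
  · exact reach_smul haut g₀⁻¹ hr

lemma absorb (hconn : Y.Connected) (hlf : ∀ v : V, (Y.neighborSet v).Finite)
    (haut : ∀ (g : H) (u v : V), Y.Adj (g • u) (g • v) ↔ Y.Adj u v)
    (S : Finset V) (hS : S.Nonempty) :
    ∃ D : Finset V, S ⊆ D ∧
      sat (H := H) ↑D = sat (H := H) ↑S ∪ bddPart (H := H) Y ↑S := by
  classical
  set A : Set V := (sat (H := H) (↑S : Set V))ᶜ with hA
  have hNfin : {x : V | (∃ s ∈ S, Y.Adj x s) ∧ x ∈ A}.Finite := by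
    refine Set.Finite.subset (Set.Finite.biUnion S.finite_toSet
      (fun s _ => hlf s)) ?_
    rintro x ⟨⟨s, hs, hadj⟩, -⟩
    exact Set.mem_biUnion hs hadj.symm
  set N : Finset V := hNfin.toFinset with hN
  set t : V → Finset V := fun a =>
    if h : a ∈ bddPart (H := H) Y (↑S : Set V) then h.choose_spec.choose else ∅ with hT
  have ht : ∀ a (h : a ∈ bddPart (H := H) Y (↑S : Set V)),
      Subtype.val '' ((Y.induce A).connectedComponentMk ⟨a, h.choose⟩).supp
        ⊆ sat (H := H) ↑(t a) := by
    intro a h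
    simp only [hT, dif_pos h]
    exact h.choose_spec.choose_spec
  set T₀ : Finset V := N.biUnion t with hT₀
  have claim1 : bddPart (H := H) Y (↑S : Set V) ⊆ sat (H := H) ↑T₀ := by
    intro b hb
    have hbA : b ∈ A := hb.choose
    obtain ⟨g, x, s, hs, hadj, hx, hgb, hr⟩ := to_boundary hconn haut
      ⟨hS.choose, hS.choose_spec⟩ (v := b) hbA
    have hxN : x ∈ N := by
      rw [hN, Set.Finite.mem_toFinset]
      exact ⟨⟨s, hs, hadj⟩, hx⟩
    have hgbB : g • b ∈ bddPart (H := H) Y (↑S : Set V) := smul_mem_bddPart haut g hb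
    have hxB : x ∈ bddPart (H := H) Y (↑S : Set V) := bdd_of_reach hr hgbB
    have hmem : g • b ∈ Subtype.val ''
        ((Y.induce A).connectedComponentMk ⟨x, hxB.choose⟩).supp := by
      rw [mem_val_supp]
      exact ⟨hgb, ConnectedComponent.sound hr⟩
    have h1 : g • b ∈ sat (H := H) ↑(t x) := ht x hxB hmem
    have h2 : b ∈ sat (H := H) ↑(t x) := by
      have := smul_mem_sat (S := (↑(t x) : Set V)) g⁻¹ h1
      rwa [inv_smul_smul] at this
    exact sat_mono (by exact_mod_cast Finset.subset_biUnion_of_mem t hxN) h2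
  set r : V → V := fun u =>
    if h : ∃ g : H, g • u ∈ bddPart (H := H) Y (↑S : Set V) ∪ sat (H := H) ↑S
      then h.choose • u else hS.choose with hr
  refine ⟨T₀.image r ∪ S, Finset.subset_union_right, ?_⟩
  have hTsub : ↑(T₀.image r ∪ S) ⊆
      bddPart (H := H) Y (↑S : Set V) ∪ sat (H := H) (↑S : Set V) := by
    intro u hu
    rw [Finset.coe_union, Set.mem_union] at hu
    rcases hu with hu | hu
    · simp only [Finset.coe_image, Set.mem_image] at hu
      obtain ⟨u₀, -, rfl⟩ := hu
      by_cases h : ∃ g : H, g • u₀ ∈ bddPart (H := H) Y (↑S : Set V) ∪ sat (H := H) ↑S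
      · have := h.choose_spec
        simp only [hr, dif_pos h]
        exact this
      · simp only [hr, dif_neg h]
        exact Or.inr (subset_sat hS.choose_spec)
    · exact Or.inr (subset_sat hu)
  refine Set.Subset.antisymm ?_ ?_
  · -- ⊆
    intro w hw
    obtain ⟨g, u, hu, rfl⟩ := mem_sat.mp hw
    rcases hTsub hu with h | h
    · exact Or.inr (smul_mem_bddPart haut g h)
    · exact Or.inl (smul_mem_sat g h)
  · -- ⊇
    rintro w (hw | hw)
    · exact sat_mono (by exact_mod_cast (Finset.subset_union_right : S ⊆ T₀.image r ∪ S)) hw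
    · -- w ∈ bddPart ⊆ sat T₀, rewrite through r
      obtain ⟨g, u, hu, rfl⟩ := mem_sat.mp (claim1 hw)
      have h : ∃ g' : H, g' • u ∈ bddPart (H := H) Y (↑S : Set V) ∪ sat (H := H) ↑S :=
        ⟨g, Or.inl hw⟩
      have hru : r u = h.choose • u := by simp only [hr, dif_pos h]
      have hmem : r u ∈ (↑(T₀.image r ∪ S) : Set V) := by
        rw [Finset.coe_union]
        exact Or.inl (by exact_mod_cast Finset.mem_image_of_mem r hu)
      refine mem_sat.mpr ⟨g * h.choose⁻¹, r u, hmem, ?_⟩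
      rw [hru, smul_smul, mul_assoc, inv_mul_cancel, mul_one]

/-- Balls around a root vertex. -/
def ball (Y : SimpleGraph V) (r : V) : ℕ → Set V
  | 0 => {r}
  | n + 1 => ball Y r n ∪ {x | ∃ w ∈ ball Y r n, Y.Adj x w}

lemma ball_finite (hlf : ∀ v : V, (Y.neighborSet v).Finite) (r : V) :
    ∀ n, (ball Y r n).Finite := by
  intro n
  induction n with
  | zero => exact Set.finite_singleton r
  | succ n ih =>
    refine Set.Finite.union ih (Set.Finite.subset (Set.Finite.biUnion ih fun w _ => hlf w) ?_)
    rintro x ⟨w, hw, hadj⟩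
    exact Set.mem_biUnion hw hadj.symm

lemma ball_mono (r : V) : ∀ n, ball Y r n ⊆ ball Y r (n + 1) :=
  fun _ => Set.subset_union_left

lemma ball_mono' (r : V) : ∀ {m n : ℕ}, m ≤ n → ball Y r m ⊆ ball Y r n := by
  intro m n h
  induction h with
  | refl => exact subset_rfl
  | step _ ih => exact ih.trans (ball_mono r _)

lemma walk_mem_ball (r : V) : ∀ {u v : V} (p : Y.Walk u v) (n : ℕ),
    u ∈ ball Y r n → v ∈ ball Y r (n + p.length) := by
  intro u v p
  induction p with
  | nil => intro n h; simpa using h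
  | @cons a b c hab p ih =>
    intro n ha
    have hb : b ∈ ball Y r (n + 1) := Or.inr ⟨a, ha, hab.symm⟩
    have := ih (n + 1) hb
    rw [Walk.length_cons]
    convert this using 2
    omega

lemma ball_eq_univ (hconn : Y.Connected) (r : V) : (⋃ n, ball Y r n) = Set.univ := by
  refine Set.eq_univ_of_forall fun v => ?_
  obtain ⟨p⟩ := hconn r v
  exact Set.mem_iUnion.mpr ⟨0 + p.length, walk_mem_ball r p 0 rfl⟩

/-- Any finite set is contained in some ball. -/
lemma finset_subset_ball (hconn : Y.Connected) (r : V) (R : Finset V) :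
    ∃ n, ↑R ⊆ ball Y r n := by
  classical
  induction R using Finset.induction with
  | empty => exact ⟨0, by simp⟩
  | @insert a s hx ih =>
    obtain ⟨n, hn⟩ := ih
    obtain ⟨p⟩ := hconn r a
    refine ⟨max (0 + p.length) n, ?_⟩
    rw [Finset.coe_insert, Set.insert_subset_iff]
    exact ⟨ball_mono' r (le_max_left _ _) (walk_mem_ball r p 0 rfl),
      hn.trans (ball_mono' r (le_max_right _ _))⟩

-- new material
/-- In the complement of an "absorbed" set all components are unbounded. -/
lemma unbdd_of_absorbed {A D : Finset V}
    (hD : sat (H := H) ↑D = sat (H := H) ↑A ∪ bddPart (H := H) Y ↑A)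
    (c : (Y.induce ((sat (H := H) (↑D : Set V))ᶜ)).ConnectedComponent) :
    ¬ (⊤ : Subgroup H).bddSet (Subtype.val '' c.supp) := by
  rintro ⟨T, hT⟩
  obtain ⟨⟨v, hv⟩, rfl⟩ := c.exists_rep
  have hvD : v ∉ sat (H := H) (↑D : Set V) := hv
  rw [hD] at hvD
  have hvA : v ∉ sat (H := H) (↑A : Set V) := fun h => hvD (Or.inl h)
  have hvB : v ∉ bddPart (H := H) Y ↑A := fun h => hvD (Or.inr h)
  refine hvB ⟨hvA, T, ?_⟩
  intro w hw
  rw [mem_val_supp] at hw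
  obtain ⟨hwA, hwc⟩ := hw
  obtain ⟨p⟩ : (Y.induce ((sat (H := H) (↑A : Set V))ᶜ)).Reachable ⟨v, hvA⟩ ⟨w, hwA⟩ :=
    (ConnectedComponent.eq.mp hwc).symm
  have hWW' : ∀ x, x ∈ (sat (H := H) (↑A : Set V))ᶜ → x ∉ bddPart (H := H) Y ↑A →
      x ∈ (sat (H := H) (↑D : Set V))ᶜ := by
    intro x hx hxB
    rw [Set.mem_compl_iff, hD]
    exact fun h => h.elim hx hxB
  have hB : ∀ {x y : V} (hx : x ∈ (sat (H := H) (↑A : Set V))ᶜ)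
      (hy : y ∈ (sat (H := H) (↑A : Set V))ᶜ),
      (Y.induce ((sat (H := H) (↑A : Set V))ᶜ)).Adj ⟨x, hx⟩ ⟨y, hy⟩ →
      x ∉ bddPart (H := H) Y ↑A → y ∉ bddPart (H := H) Y ↑A := by
    intro x y hx hy hadj hxB hyB
    exact hxB (bdd_of_reach (Adj.reachable hadj).symm hyB)
  obtain ⟨hu', hw', hr⟩ := reach_transfer hWW' hB p hvB
  refine hT ?_
  refine mem_val_supp.mpr ?_
  exact ⟨hw', ConnectedComponent.sound hr.symm⟩

/-- Unbounded components lift to unbounded components at higher levels. -/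
lemma lift_unbdd (hconn : Y.Connected) (hlf : ∀ v : V, (Y.neighborSet v).Finite)
    (haut : ∀ (g : H) (u v : V), Y.Adj (g • u) (g • v) ↔ Y.Adj u v)
    {S S' : Finset V} (hSS' : S ⊆ S') (hS' : S'.Nonempty)
    (c : (Y.induce ((sat (H := H) (↑S : Set V))ᶜ)).ConnectedComponent)
    (hc : ¬ (⊤ : Subgroup H).bddSet (Subtype.val '' c.supp)) :
    ∃ c' : (Y.induce ((sat (H := H) (↑S' : Set V))ᶜ)).ConnectedComponent,
      ¬ (⊤ : Subgroup H).bddSet (Subtype.val '' c'.supp) ∧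
      c'.map (Y.inclHom (Set.compl_subset_compl.mpr
        (sat_mono (Finset.coe_subset.mpr hSS')))) = c := by
  obtain ⟨D, hSD, hD⟩ := absorb hconn hlf haut S' hS'
  have : ¬ (Subtype.val '' c.supp ⊆ sat (H := H) (↑D : Set V)) := fun h => hc ⟨D, h⟩
  obtain ⟨v, hvc, hvD⟩ := Set.not_subset.mp this
  rw [hD] at hvD
  have hvS' : v ∉ sat (H := H) (↑S' : Set V) := fun h => hvD (Or.inl h)
  have hvB : v ∉ bddPart (H := H) Y ↑S' := fun h => hvD (Or.inr h)
  refine ⟨(Y.induce ((sat (H := H) (↑S' : Set V))ᶜ)).connectedComponentMk ⟨v, hvS'⟩,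
    ?_, ?_⟩
  · exact fun hb => hvB ⟨hvS', hb⟩
  · obtain ⟨hvS, hmk⟩ := mem_val_supp.mp hvc
    rw [ConnectedComponent.map_mk]
    exact hmk

-- new material
lemma map_incl_trans {W1 W2 W3 : Set V} (h12 : W2 ⊆ W1) (h23 : W3 ⊆ W2)
    (c : (Y.induce W3).ConnectedComponent) :
    (c.map (Y.inclHom h23)).map (Y.inclHom h12) = c.map (Y.inclHom (h23.trans h12)) :=
  c.ind fun _ => rfl

lemma map_incl_self {W : Set V} (h : W ⊆ W) (c : (Y.induce W).ConnectedComponent) :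
    c.map (Y.inclHom h) = c :=
  c.ind fun _ => rfl

lemma exists_thread (hconn : Y.Connected) (hlf : ∀ v : V, (Y.neighborSet v).Finite)
    (haut : ∀ (g : H) (u v : V), Y.Adj (g • u) (g • v) ↔ Y.Adj u v)
    (chain : ℕ → Finset V) (hcne : ∀ n, (chain n).Nonempty)
    (hcmono : ∀ {m n : ℕ}, m ≤ n → chain m ⊆ chain n)
    (hcof : ∀ R : Finset V, ∃ n, R ⊆ chain n)
    (S : Finset V) (c : (Y.induce ((sat (H := H) (↑S : Set V))ᶜ)).ConnectedComponent)
    (hc : ¬ (⊤ : Subgroup H).bddSet (Subtype.val '' c.supp)) :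
    ∃ f : filteredEnds Y (⊤ : Subgroup H), f.1 S = c := by
  classical
  set Q : ℕ → Finset V := fun n => S ∪ chain n with hQdef
  have hSQ : ∀ n, S ⊆ Q n := fun n => Finset.subset_union_left
  have hQne : ∀ n, (Q n).Nonempty := fun n =>
    Finset.Nonempty.mono Finset.subset_union_right (hcne n)
  have hQmono : ∀ {m n : ℕ}, m ≤ n → Q m ⊆ Q n := fun h =>
    Finset.union_subset_union_right (hcmono h)
  have hcomplQ : ∀ {m n : ℕ}, m ≤ n →
      (sat (H := H) (↑(Q n) : Set V))ᶜ ⊆ (sat (H := H) (↑(Q m) : Set V))ᶜ :=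
    fun h => Set.compl_subset_compl.mpr (sat_mono (Finset.coe_subset.mpr (hQmono h)))
  -- the recursively chosen compatible sequence of unbounded components
  let g : ∀ n : ℕ, {c' : (Y.induce ((sat (H := H) (↑(Q n) : Set V))ᶜ)).ConnectedComponent //
      ¬ (⊤ : Subgroup H).bddSet (Subtype.val '' c'.supp)} := fun n =>
    Nat.rec
      ⟨(lift_unbdd hconn hlf haut (hSQ 0) (hQne 0) c hc).choose,
        (lift_unbdd hconn hlf haut (hSQ 0) (hQne 0) c hc).choose_spec.1⟩
      (fun n p =>
        ⟨(lift_unbdd hconn hlf haut (hQmono (Nat.le_succ n)) (hQne (n+1)) p.1 p.2).choose,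
          (lift_unbdd hconn hlf haut (hQmono (Nat.le_succ n)) (hQne (n+1)) p.1 p.2).choose_spec.1⟩)
      n
  have hg0 : ((g 0).1).map (Y.inclHom (Set.compl_subset_compl.mpr
      (sat_mono (Finset.coe_subset.mpr (hSQ 0))))) = c :=
    (lift_unbdd hconn hlf haut (hSQ 0) (hQne 0) c hc).choose_spec.2
  have hgsucc : ∀ n : ℕ, ((g (n+1)).1).map (Y.inclHom (hcomplQ (Nat.le_succ n))) = (g n).1 :=
    fun n =>
      (lift_unbdd hconn hlf haut (hQmono (Nat.le_succ n)) (hQne (n+1))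
        (g n).1 (g n).2).choose_spec.2
  have down : ∀ m n : ℕ, (h : n ≤ m) →
      ((g m).1).map (Y.inclHom (hcomplQ h)) = (g n).1 := by
    intro m n h
    induction m with
    | zero =>
      have : n = 0 := Nat.le_zero.mp h
      subst this
      exact map_incl_self _ _
    | succ m ih =>
      rcases Nat.lt_or_ge n (m+1) with hlt | hge
      · have hnm : n ≤ m := Nat.lt_succ_iff.mp hlt
        rw [← ih hnm, ← hgsucc m, map_incl_trans]
      · have : n = m + 1 := le_antisymm h hge
        subst this
        exact map_incl_self _ _
  -- index function
  have hcofQ : ∀ R : Finset V, ∃ n, R ⊆ Q n := fun R => by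
    obtain ⟨n, hn⟩ := hcof R
    exact ⟨n, hn.trans Finset.subset_union_right⟩
  let idx : Finset V → ℕ := fun R => (hcofQ R).choose
  have hidx : ∀ R : Finset V, R ⊆ Q (idx R) := fun R => (hcofQ R).choose_spec
  have hcomplR : ∀ {R : Finset V} {n : ℕ}, R ⊆ Q n →
      (sat (H := H) (↑(Q n) : Set V))ᶜ ⊆ (sat (H := H) (↑R : Set V))ᶜ :=
    fun h => Set.compl_subset_compl.mpr (sat_mono (Finset.coe_subset.mpr h))
  let f : ∀ R : Finset V, (Y.induce ((sat (H := H) (↑R : Set V))ᶜ)).ConnectedComponent :=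
    fun R => ((g (idx R)).1).map (Y.inclHom (hcomplR (hidx R)))
  -- the key coherence property
  have key : ∀ (R : Finset V) (n : ℕ) (hRn : R ⊆ Q n),
      ((g n).1).map (Y.inclHom (hcomplR hRn)) = f R := by
    have aux : ∀ (R : Finset V) (n m : ℕ) (h : n ≤ m) (hRn : R ⊆ Q n),
        ((g m).1).map (Y.inclHom (hcomplR (hRn.trans (hQmono h)))) =
        ((g n).1).map (Y.inclHom (hcomplR hRn)) := by
      intro R n m h hRn
      rw [← down m n h, map_incl_trans]
    intro R n hRn
    rcases le_total n (idx R) with h | h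
    · rw [← aux R n (idx R) h hRn]
    · exact (aux R (idx R) n h (hidx R))
  -- compatibility
  have compat : ∀ ⦃R R' : Finset V⦄ (h : R ⊆ R'),
      (f R').map (Y.inclHom (Set.compl_subset_compl.mpr
        ((⊤ : Subgroup H).satSet_mono (Finset.coe_subset.mpr h)))) = f R := by
    intro R R' h
    obtain ⟨n, hn⟩ := hcofQ R'
    have hRn : R ⊆ Q n := h.trans hn
    rw [← key R' n hn, map_incl_trans]
    exact key R n hRn
  refine ⟨⟨f, compat⟩, ?_⟩
  show f S = c
  rw [← key S 0 (hSQ 0)]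
  exact hg0


lemma inj_threshold [Finite (filteredEnds Y (⊤ : Subgroup H))] :
    ∃ Sstar : Finset V, ∀ D : Finset V, Sstar ⊆ D →
      Function.Injective (fun f : filteredEnds Y (⊤ : Subgroup H) => f.1 D) := by
  classical
  haveI := Fintype.ofFinite (filteredEnds Y (⊤ : Subgroup H))
  set R : filteredEnds Y (⊤ : Subgroup H) × filteredEnds Y (⊤ : Subgroup H) → Finset V :=
    fun p => if h : ∃ R0 : Finset V, p.1.1 R0 ≠ p.2.1 R0 then h.choose else ∅ with hR
  refine ⟨Finset.univ.biUnion R, ?_⟩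
  intro D hD f g hfg
  have hfg' : f.1 D = g.1 D := hfg
  by_contra hne
  have h : ∃ R0 : Finset V, f.1 R0 ≠ g.1 R0 := by
    by_contra hcon
    push_neg at hcon
    exact hne (Subtype.ext (funext hcon))
  have hRp : R (f, g) = h.choose := by simp only [hR, dif_pos h]
  have hval : f.1 (R (f, g)) ≠ g.1 (R (f, g)) := by rw [hRp]; exact h.choose_spec
  have hsub : R (f, g) ⊆ D :=
    (Finset.subset_biUnion_of_mem R (Finset.mem_univ (f, g))).trans hD
  apply hval
  rw [← f.2 hsub, ← g.2 hsub, hfg']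

end StmtAux

open StmtAux in
theorem stmt7 {V H : Type} [Group H] [MulAction H V] (Y : SimpleGraph V)
    (hconn : Y.Connected)
    (hlf : ∀ v : V, (Y.neighborSet v).Finite)
    (hfree : ∀ (g : H) (v : V), g • v = v → g = 1)
    (haut : ∀ (g : H) (u v : V), Y.Adj (g • u) (g • v) ↔ Y.Adj u v)
    (e : ℕ) (he : e ≠ 0)
    (hE : Cardinal.mk (filteredEnds Y (⊤ : Subgroup H)) = e) :
    ∃ D : ℕ → Finset V,
      (∀ n, D n ⊆ D (n + 1)) ∧
      (⋃ n, (⊤ : Subgroup H).satSet ((D n : Finset V) : Set V)) = Set.univ ∧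
      ∀ n,
        Nat.card ((Y.induce (((⊤ : Subgroup H).satSet ((D n : Finset V) : Set V))ᶜ)).ConnectedComponent) = e ∧
        ∀ c : (Y.induce (((⊤ : Subgroup H).satSet ((D n : Finset V) : Set V))ᶜ)).ConnectedComponent,
          ¬ (⊤ : Subgroup H).bddSet (Subtype.val '' c.supp) := by
  classical
  obtain ⟨eqv⟩ : Nonempty (filteredEnds Y (⊤ : Subgroup H) ≃ Fin e) := by
    rw [Cardinal.mk_eq_nat_iff] at hE; exact hE
  haveI : Finite (filteredEnds Y (⊤ : Subgroup H)) := Finite.intro eqv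
  have hcard : Nat.card (filteredEnds Y (⊤ : Subgroup H)) = e := Nat.card_eq_of_equiv_fin eqv
  obtain ⟨Sstar, hSstar⟩ := inj_threshold (Y := Y) (H := H)
  obtain ⟨r0⟩ := hconn.nonempty
  set chain : ℕ → Finset V := fun n => (ball_finite hlf r0 n).toFinset with hchain
  have hcne : ∀ n, (chain n).Nonempty := fun n =>
    ⟨r0, (Set.Finite.mem_toFinset _).mpr (ball_mono' r0 (Nat.zero_le n) rfl)⟩
  have hcmono : ∀ {m n : ℕ}, m ≤ n → chain m ⊆ chain n := by
    intro m n h x hx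
    rw [Set.Finite.mem_toFinset] at *
    exact ball_mono' r0 h hx
  have hcof : ∀ R : Finset V, ∃ n, R ⊆ chain n := by
    intro R
    obtain ⟨n, hn⟩ := finset_subset_ball hconn r0 R
    exact ⟨n, fun x hx => (Set.Finite.mem_toFinset _).mpr (hn hx)⟩
  -- the sequence of finite sets
  let D : ℕ → Finset V := fun n =>
    Nat.rec (motive := fun _ => Finset V)
      (absorb hconn hlf haut (Sstar ∪ chain 0)
        (Finset.Nonempty.mono Finset.subset_union_right (hcne 0))).choose
      (fun n Dn =>
        (absorb hconn hlf haut (Dn ∪ chain (n + 1))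
          (Finset.Nonempty.mono Finset.subset_union_right (hcne (n + 1)))).choose)
      n
  have hspec0 :=
    (absorb hconn hlf haut (Sstar ∪ chain 0)
      (Finset.Nonempty.mono Finset.subset_union_right (hcne 0))).choose_spec
  have hspecs := fun n : ℕ =>
    (absorb hconn hlf haut (D n ∪ chain (n + 1))
      (Finset.Nonempty.mono Finset.subset_union_right (hcne (n + 1)))).choose_spec
  have hDmono : ∀ n, D n ⊆ D (n + 1) := fun n =>
    Finset.subset_union_left.trans (hspecs n).1
  have hchainD : ∀ n, chain n ⊆ D n := by
    intro n
    cases n with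
    | zero => exact Finset.subset_union_right.trans hspec0.1
    | succ n => exact Finset.subset_union_right.trans (hspecs n).1
  have hSstarD : ∀ n, Sstar ⊆ D n := by
    intro n
    induction n with
    | zero => exact Finset.subset_union_left.trans hspec0.1
    | succ n ih => exact ih.trans (hDmono n)
  have habs : ∀ n, ∃ A : Finset V,
      sat (H := H) ((D n : Finset V) : Set V) =
        sat (H := H) (↑A : Set V) ∪ bddPart (H := H) Y (↑A : Set V) := by
    intro n
    cases n with
    | zero => exact ⟨Sstar ∪ chain 0, hspec0.2⟩
    | succ n => exact ⟨D n ∪ chain (n + 1), (hspecs n).2⟩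
  refine ⟨D, hDmono, ?_, ?_⟩
  · -- exhaustion
    refine Set.eq_univ_of_forall fun v => ?_
    have hv : v ∈ ⋃ n, StmtAux.ball Y r0 n := by rw [ball_eq_univ hconn r0]; trivial
    obtain ⟨m, hm⟩ := Set.mem_iUnion.mp hv
    refine Set.mem_iUnion.mpr ⟨m, ?_⟩
    exact subset_sat (hchainD m ((Set.Finite.mem_toFinset _).mpr hm))
  · intro n
    obtain ⟨A, hA⟩ := habs n
    have cond2 : ∀ c : (Y.induce (((⊤ : Subgroup H).satSet
        ((D n : Finset V) : Set V))ᶜ)).ConnectedComponent,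
        ¬ (⊤ : Subgroup H).bddSet (Subtype.val '' c.supp) :=
      fun c => unbdd_of_absorbed hA c
    refine ⟨?_, cond2⟩
    have hbij : Function.Bijective
        (fun f : filteredEnds Y (⊤ : Subgroup H) => f.1 (D n)) := by
      constructor
      · exact hSstar (D n) (hSstarD n)
      · intro c
        obtain ⟨f, hf⟩ := exists_thread hconn hlf haut chain hcne hcmono hcof (D n) c
          (cond2 c)
        exact ⟨f, hf⟩
    rw [← Nat.card_eq_of_bijective _ hbij]
    exact hcard
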